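/- There exists a constant C > 0 such that for every nonzero integer k, every y ∈ [0,1], and every integer m with 0 ≤ m ≤ 5, ∫₀¹ |∂_z G_k(y,z)|·|log|z − y||^m dz ≤ C·(log(2+|k|))^m / |k|. -/

import Mathlib

/-- The z-derivative of the Green's function of `k² - d²/dy²` on `(0,1)`
with Dirichlet boundary conditions, away from the diagonal. -/
noncomputable def greenGz (k : ℤ) (y z : ℝ) : ℝ :=
  if y < z then -Real.cosh (k * (1 - z)) * Real.sinh (k * y) / Real.sinh k
  else Real.cosh (k * z) * Real.sinh (k * (1 - y)) / Real.sinh k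

open Real MeasureTheory intervalIntegral

namespace GreenAux

/-- basic product bound : cosh p * sinh q / sinh a ≤ 2 exp (p + q - a) -/
lemma cosh_sinh_div_bound {a p q : ℝ} (ha : 1 ≤ a) (hp : 0 ≤ p) (hq : 0 ≤ q) :
    Real.cosh p * Real.sinh q / Real.sinh a ≤ 2 * Real.exp (p + q - a) := by
  have hsa : Real.exp a / 4 ≤ Real.sinh a := by
    rw [Real.sinh_eq]
    have hea : (2:ℝ) ≤ Real.exp a := by
      have := Real.add_one_le_exp a; linarith
    have h3 : Real.exp (-a) * Real.exp a = 1 := by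
      rw [← Real.exp_add]; simp
    have h1 : Real.exp (-a) ≤ Real.exp a / 4 := by
      nlinarith [Real.exp_pos (-a), Real.exp_pos a]
    linarith
  have hsa0 : 0 < Real.sinh a := lt_of_lt_of_le (by positivity) hsa
  have hchp : Real.cosh p ≤ Real.exp p := by
    rw [Real.cosh_eq]
    have : Real.exp (-p) ≤ Real.exp p := Real.exp_le_exp.mpr (by linarith)
    linarith
  have hshq : Real.sinh q ≤ Real.exp q / 2 := by
    rw [Real.sinh_eq]
    have : 0 < Real.exp (-q) := Real.exp_pos _
    linarith
  have hsq : 0 ≤ Real.sinh q := by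
    rw [Real.sinh_eq]
    have : Real.exp (-q) ≤ Real.exp q := Real.exp_le_exp.mpr (by linarith)
    linarith
  have hnum : Real.cosh p * Real.sinh q ≤ Real.exp p * (Real.exp q / 2) :=
    mul_le_mul hchp hshq hsq (Real.exp_pos p).le
  calc Real.cosh p * Real.sinh q / Real.sinh a
      ≤ Real.exp p * (Real.exp q / 2) / (Real.exp a / 4) := by
        apply div_le_div₀ (by positivity) hnum (by positivity) hsa
    _ = 2 * (Real.exp p * Real.exp q / Real.exp a) := by ring
    _ = 2 * Real.exp (p + q - a) := by
        rw [← Real.exp_add, ← Real.exp_sub]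

lemma green_bound {k : ℤ} (hk : k ≠ 0) {y z : ℝ} (hy0 : 0 ≤ y) (hy1 : y ≤ 1)
    (hz0 : 0 ≤ z) (hz1 : z ≤ 1) :
    |greenGz k y z| ≤ 2 * Real.exp (-(|(k:ℝ)| * |z - y|)) := by
  set a : ℝ := |(k:ℝ)| with ha_def
  have ha1 : (1:ℝ) ≤ a := by
    have := Int.one_le_abs hk
    have : ((1:ℤ):ℝ) ≤ ((|k|:ℤ):ℝ) := by exact_mod_cast this
    simpa [ha_def, Int.cast_abs] using this
  have hsabs : |Real.sinh (k:ℝ)| = Real.sinh a := by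
    rw [Real.abs_sinh]
  rw [greenGz]
  by_cases h : y < z
  · rw [if_pos h]
    have habs : |z - y| = z - y := abs_of_nonneg (by linarith)
    have h1 : |(k:ℝ) * (1 - z)| = a * (1 - z) := by
      rw [abs_mul, abs_of_nonneg (by linarith : (0:ℝ) ≤ 1 - z)]
    have h2 : |(k:ℝ) * y| = a * y := by
      rw [abs_mul, abs_of_nonneg hy0]
    have : |-Real.cosh ((k:ℝ) * (1 - z)) * Real.sinh ((k:ℝ) * y) / Real.sinh (k:ℝ)|
        = Real.cosh (a * (1 - z)) * Real.sinh (a * y) / Real.sinh a := by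
      rw [abs_div, abs_mul, abs_neg, hsabs, ← Real.cosh_abs, Real.abs_sinh, h1, h2,
        abs_of_pos (Real.cosh_pos _)]
    rw [this]
    have := cosh_sinh_div_bound (a := a) (p := a * (1 - z)) (q := a * y) ha1
      (by nlinarith) (by nlinarith)
    calc Real.cosh (a * (1 - z)) * Real.sinh (a * y) / Real.sinh a
        ≤ 2 * Real.exp (a * (1 - z) + a * y - a) := this
      _ = 2 * Real.exp (-(a * |z - y|)) := by rw [habs]; ring_nf
  · rw [if_neg h]
    push_neg at h
    have habs : |z - y| = y - z := by rw [abs_sub_comm]; exact abs_of_nonneg (by linarith)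
    have h1 : |(k:ℝ) * z| = a * z := by rw [abs_mul, abs_of_nonneg hz0]
    have h2 : |(k:ℝ) * (1 - y)| = a * (1 - y) := by
      rw [abs_mul, abs_of_nonneg (by linarith : (0:ℝ) ≤ 1 - y)]
    have : |Real.cosh ((k:ℝ) * z) * Real.sinh ((k:ℝ) * (1 - y)) / Real.sinh (k:ℝ)|
        = Real.cosh (a * z) * Real.sinh (a * (1 - y)) / Real.sinh a := by
      rw [abs_div, abs_mul, hsabs, ← Real.cosh_abs, Real.abs_sinh, h1, h2,
        abs_of_pos (Real.cosh_pos _)]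
    rw [this]
    have := cosh_sinh_div_bound (a := a) (p := a * z) (q := a * (1 - y)) ha1
      (by nlinarith) (by nlinarith)
    calc Real.cosh (a * z) * Real.sinh (a * (1 - y)) / Real.sinh a
        ≤ 2 * Real.exp (a * z + a * (1 - y) - a) := this
      _ = 2 * Real.exp (-(a * |z - y|)) := by rw [habs]; ring_nf

/-- `(1 - log s)^5 ≤ 10^5 * s^(-1/2)` for `0 < s ≤ 1`. -/
lemma one_sub_log_pow_bound {s : ℝ} (hs : 0 < s) (hs1 : s ≤ 1) :
    (1 - Real.log s) ^ 5 ≤ 10 ^ 5 * s ^ (-(1/2) : ℝ) := by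
  set u : ℝ := s ^ (-(1/10) : ℝ) with hu_def
  have hu0 : 0 < u := Real.rpow_pos_of_pos hs _
  have hlogu : Real.log u = -(1/10) * Real.log s := Real.log_rpow hs _
  have hlu : Real.log u ≤ u - 1 := Real.log_le_sub_one_of_pos hu0
  have hkey : 1 - Real.log s ≤ 10 * u := by
    have : 1 - Real.log s = 1 + 10 * Real.log u := by rw [hlogu]; ring
    rw [this]; nlinarith
  have hnn : 0 ≤ 1 - Real.log s := by
    have := Real.log_nonpos hs.le hs1; linarith
  have hpow : (1 - Real.log s) ^ 5 ≤ (10 * u) ^ 5 := pow_le_pow_left₀ hnn hkey 5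
  have hu5 : u ^ 5 = s ^ (-(1/2) : ℝ) := by
    rw [hu_def, ← Real.rpow_natCast (s ^ (-(1/10) : ℝ)) 5, ← Real.rpow_mul hs.le]
    norm_num
  calc (1 - Real.log s) ^ 5 ≤ (10 * u) ^ 5 := hpow
    _ = 10 ^ 5 * u ^ 5 := by ring
    _ = 10 ^ 5 * s ^ (-(1/2) : ℝ) := by rw [hu5]

/-- pointwise log bound. -/
lemma log_pow_bound {a t : ℝ} (ha : 1 ≤ a) (ht : 0 < t) (ht1 : t ≤ 1)
    {m : ℕ} (hm : m ≤ 5) :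
    |Real.log t| ^ m ≤ Real.log (2 + a) ^ m *
      (10 ^ 5 * (a * t) ^ (-(1/2) : ℝ) * Real.exp (a * t / 2)) := by
  have ha0 : 0 < a := by linarith
  set L : ℝ := Real.log (2 + a) with hL_def
  have hL1 : 1 ≤ L := by
    rw [hL_def, Real.le_log_iff_exp_le (by linarith)]
    have := Real.exp_one_lt_d9
    linarith
  have hlogt : |Real.log t| = -Real.log t :=
    abs_of_nonpos (Real.log_nonpos ht.le ht1)
  have hloga : Real.log a ≤ L := Real.log_le_log ha0 (by linarith)
  set s : ℝ := a * t with hs_def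
  have hs0 : 0 < s := by positivity
  rcases le_or_gt 1 s with hs1 | hs1
  · -- case a*t ≥ 1 : |log t| ≤ L and 1 ≤ 10^5 s^{-1/2} e^{s/2}
    have h1 : -Real.log t ≤ L := by
      have hta : 1/a ≤ t := by rw [div_le_iff₀ ha0]; linarith [mul_comm a t]
      have := Real.log_le_log (by positivity) hta
      rw [Real.log_div one_ne_zero (by positivity), Real.log_one] at this
      linarith
    have hpm : |Real.log t| ^ m ≤ L ^ m := by
      apply pow_le_pow_left₀ (abs_nonneg _) (by rw [hlogt]; exact h1)
    have hone : 1 ≤ 10 ^ 5 * s ^ (-(1/2) : ℝ) * Real.exp (s / 2) := by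
      have hse : s ≤ Real.exp s := by linarith [Real.add_one_le_exp s]
      have h2 : s ^ ((1/2) : ℝ) ≤ Real.exp (s / 2) := by
        calc s ^ ((1/2) : ℝ) ≤ (Real.exp s) ^ ((1/2) : ℝ) :=
              Real.rpow_le_rpow hs0.le hse (by norm_num)
          _ = Real.exp (s / 2) := by
              rw [← Real.exp_mul]; ring_nf
      have h3 : s ^ ((1/2) : ℝ) * s ^ (-(1/2) : ℝ) = 1 := by
        rw [← Real.rpow_add hs0]; norm_num
      have h4 : 0 < s ^ (-(1/2) : ℝ) := Real.rpow_pos_of_pos hs0 _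
      calc (1:ℝ) = s ^ ((1/2) : ℝ) * s ^ (-(1/2) : ℝ) := h3.symm
        _ ≤ Real.exp (s / 2) * s ^ (-(1/2) : ℝ) := by
            apply mul_le_mul_of_nonneg_right h2 h4.le
        _ ≤ 10 ^ 5 * s ^ (-(1/2) : ℝ) * Real.exp (s / 2) := by
            nlinarith [Real.exp_pos (s/2), h4]
    calc |Real.log t| ^ m ≤ L ^ m := hpm
      _ = L ^ m * 1 := (mul_one _).symm
      _ ≤ L ^ m * (10 ^ 5 * s ^ (-(1/2) : ℝ) * Real.exp (s / 2)) := by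
          apply mul_le_mul_of_nonneg_left hone (by positivity)
  · -- case s < 1
    have hlogs : Real.log s ≤ 0 := Real.log_nonpos hs0.le hs1.le
    have hts : Real.log t = Real.log s - Real.log a := by
      have : t = s / a := by rw [hs_def]; field_simp
      rw [this, Real.log_div (by positivity) (by positivity)]
    have h1 : -Real.log t ≤ L * (1 - Real.log s) := by
      have h2 : -Real.log s ≤ L * (-Real.log s) :=
        le_mul_of_one_le_left (by linarith) hL1
      have : -Real.log t = Real.log a + (-Real.log s) := by rw [hts]; ring
      rw [this]
      nlinarith
    have hL1s : (0:ℝ) ≤ L * (1 - Real.log s) := by nlinarith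
    have hpm : |Real.log t| ^ m ≤ (L * (1 - Real.log s)) ^ m := by
      apply pow_le_pow_left₀ (abs_nonneg _) (by rw [hlogt]; exact h1)
    have h15 : (1 - Real.log s) ^ m ≤ (1 - Real.log s) ^ 5 :=
      pow_le_pow_right₀ (by linarith) hm
    have h55 : (1 - Real.log s) ^ 5 ≤ 10 ^ 5 * s ^ (-(1/2) : ℝ) :=
      one_sub_log_pow_bound hs0 hs1.le
    have hexp1 : (1:ℝ) ≤ Real.exp (s / 2) := Real.one_le_exp (by positivity)
    calc |Real.log t| ^ m ≤ (L * (1 - Real.log s)) ^ m := hpm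
      _ = L ^ m * (1 - Real.log s) ^ m := mul_pow L _ m
      _ ≤ L ^ m * (10 ^ 5 * s ^ (-(1/2) : ℝ)) := by
          apply mul_le_mul_of_nonneg_left (le_trans h15 h55) (by positivity)
      _ = L ^ m * (10 ^ 5 * s ^ (-(1/2) : ℝ)) * 1 := (mul_one _).symm
      _ ≤ L ^ m * (10 ^ 5 * s ^ (-(1/2) : ℝ)) * Real.exp (s / 2) := by
          apply mul_le_mul_of_nonneg_left hexp1
          positivity
      _ = L ^ m * (10 ^ 5 * s ^ (-(1/2) : ℝ) * Real.exp (s / 2)) := by ring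

lemma integral_exp_neg_mul (b u v : ℝ) (hb : 0 < b) :
    ∫ t in u..v, Real.exp (-(b * t)) =
      (Real.exp (-(b * u)) - Real.exp (-(b * v))) / b := by
  have hd : ∀ t : ℝ, HasDerivAt (fun t => Real.exp (-(b * t)) / (-b))
      (Real.exp (-(b * t))) t := by
    intro t
    have h1 : HasDerivAt (fun t : ℝ => -(b * t)) (-b) t := by
      simpa using ((hasDerivAt_id t).const_mul (-b))
    have h2 := (Real.hasDerivAt_exp (-(b * t))).comp t h1
    have h3 := h2.div_const (-b)
    convert h3 using 1
    any_goals rfl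
    rw [mul_div_assoc, div_self (neg_ne_zero.mpr hb.ne'), mul_one]
  rw [intervalIntegral.integral_eq_sub_of_hasDerivAt (fun t _ => hd t)
    ((Real.continuous_exp.comp (by continuity)).intervalIntegrable u v)]
  rw [div_neg, div_neg, sub_div]
  ring

lemma rho_integrable (b u v : ℝ) :
    IntervalIntegrable (fun t => t ^ (-(1/2) : ℝ) * Real.exp (-(b * t))) volume u v :=
  (intervalIntegrable_rpow' (by norm_num)).mul_continuousOn
    ((Real.continuous_exp.comp (by continuity)).continuousOn)

lemma rpow_neg_half_integral {u : ℝ} (hu : 0 ≤ u) :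
    ∫ t in (0:ℝ)..u, t ^ (-(1/2) : ℝ) = 2 * u ^ ((1/2) : ℝ) := by
  rw [integral_rpow (Or.inl (by norm_num))]
  rw [Real.zero_rpow (by norm_num)]
  norm_num
  ring

lemma rho_integral_bound {b c : ℝ} (hb : 1/2 ≤ b) (hc0 : 0 ≤ c) (hc1 : c ≤ 1) :
    ∫ t in (0:ℝ)..c, t ^ (-(1/2) : ℝ) * Real.exp (-(b * t)) ≤ 3 * b ^ (-(1/2) : ℝ) := by
  have hb0 : 0 < b := by linarith
  have hbneg : (0:ℝ) < b ^ (-(1/2) : ℝ) := Real.rpow_pos_of_pos hb0 _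
  have hmono : ∀ u v : ℝ, 0 ≤ u → u ≤ v →
      ∫ t in u..v, t ^ (-(1/2) : ℝ) * Real.exp (-(b * t))
        ≤ ∫ t in u..v, t ^ (-(1/2) : ℝ) := by
    intro u v hu huv
    apply intervalIntegral.integral_mono_on huv (rho_integrable b u v)
      (intervalIntegrable_rpow' (by norm_num))
    intro t ht
    have ht0 : 0 ≤ t := le_trans hu ht.1
    have : Real.exp (-(b * t)) ≤ 1 := Real.exp_le_one_iff.mpr (by nlinarith)
    calc t ^ (-(1/2) : ℝ) * Real.exp (-(b * t)) ≤ t ^ (-(1/2) : ℝ) * 1 := by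
          apply mul_le_mul_of_nonneg_left this (Real.rpow_nonneg ht0 _)
      _ = t ^ (-(1/2) : ℝ) := mul_one _
  have hinv_half : ((1:ℝ)/b) ^ ((1/2) : ℝ) = b ^ (-(1/2) : ℝ) := by
    rw [Real.div_rpow zero_le_one hb0.le, Real.one_rpow, Real.rpow_neg hb0.le,
      one_div (b ^ ((1/2) : ℝ))]
  rcases le_or_gt c (1/b) with hcb | hcb
  · calc ∫ t in (0:ℝ)..c, t ^ (-(1/2) : ℝ) * Real.exp (-(b * t))
        ≤ ∫ t in (0:ℝ)..c, t ^ (-(1/2) : ℝ) := hmono 0 c le_rfl hc0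
      _ = 2 * c ^ ((1/2) : ℝ) := rpow_neg_half_integral hc0
      _ ≤ 2 * (1/b) ^ ((1/2) : ℝ) := by
          have := Real.rpow_le_rpow hc0 hcb (by norm_num : (0:ℝ) ≤ 1/2)
          linarith
      _ = 2 * b ^ (-(1/2) : ℝ) := by rw [hinv_half]
      _ ≤ 3 * b ^ (-(1/2) : ℝ) := by linarith
  · have hr0 : (0:ℝ) < 1/b := by positivity
    have hsplit : ∫ t in (0:ℝ)..c, t ^ (-(1/2) : ℝ) * Real.exp (-(b * t))
        = (∫ t in (0:ℝ)..(1/b), t ^ (-(1/2) : ℝ) * Real.exp (-(b * t)))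
          + ∫ t in (1/b)..c, t ^ (-(1/2) : ℝ) * Real.exp (-(b * t)) :=
      (intervalIntegral.integral_add_adjacent_intervals
        (rho_integrable b 0 (1/b)) (rho_integrable b (1/b) c)).symm
    have hpart1 : ∫ t in (0:ℝ)..(1/b), t ^ (-(1/2) : ℝ) * Real.exp (-(b * t))
        ≤ 2 * b ^ (-(1/2) : ℝ) := by
      calc ∫ t in (0:ℝ)..(1/b), t ^ (-(1/2) : ℝ) * Real.exp (-(b * t))
          ≤ ∫ t in (0:ℝ)..(1/b), t ^ (-(1/2) : ℝ) := hmono 0 (1/b) le_rfl hr0.le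
        _ = 2 * (1/b) ^ ((1/2) : ℝ) := rpow_neg_half_integral hr0.le
        _ = 2 * b ^ (-(1/2) : ℝ) := by rw [hinv_half]
    have hrbound : ((1:ℝ)/b) ^ (-(1/2) : ℝ) = b ^ ((1/2) : ℝ) := by
      rw [Real.rpow_neg (by positivity), Real.div_rpow zero_le_one hb0.le, Real.one_rpow,
        one_div (b ^ ((1/2) : ℝ)), inv_inv]
    have hpart2 : ∫ t in (1/b)..c, t ^ (-(1/2) : ℝ) * Real.exp (-(b * t))
        ≤ b ^ (-(1/2) : ℝ) := by
      have hstep : ∫ t in (1/b)..c, t ^ (-(1/2) : ℝ) * Real.exp (-(b * t))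
          ≤ ∫ t in (1/b)..c, b ^ ((1/2) : ℝ) * Real.exp (-(b * t)) := by
        apply intervalIntegral.integral_mono_on hcb.le (rho_integrable b _ _)
          (((Real.continuous_exp.comp (by continuity)).intervalIntegrable _ _).const_mul _)
        intro t ht
        have ht0 : 0 < t := lt_of_lt_of_le hr0 ht.1
        have h1 : t ^ (-(1/2) : ℝ) ≤ b ^ ((1/2) : ℝ) := by
          rw [← hrbound]
          exact Real.rpow_le_rpow_of_nonpos hr0 ht.1 (by norm_num)
        exact mul_le_mul_of_nonneg_right h1 (Real.exp_pos _).le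
      have hev : ∫ t in (1/b)..c, b ^ ((1/2) : ℝ) * Real.exp (-(b * t))
          = b ^ ((1/2) : ℝ) * ((Real.exp (-(b * (1/b))) - Real.exp (-(b * c))) / b) := by
        rw [intervalIntegral.integral_const_mul, integral_exp_neg_mul b _ _ hb0]
      have hnum : Real.exp (-(b * (1/b))) - Real.exp (-(b * c)) ≤ 1 := by
        have h1 : Real.exp (-(b * (1/b))) ≤ 1 := Real.exp_le_one_iff.mpr (by rw [neg_nonpos]; positivity)
        have h2 : 0 < Real.exp (-(b * c)) := Real.exp_pos _
        linarith
      have hfin : b ^ ((1/2) : ℝ) * ((Real.exp (-(b * (1/b))) - Real.exp (-(b * c))) / b)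
          ≤ b ^ ((1/2) : ℝ) * (1 / b) := by
        apply mul_le_mul_of_nonneg_left _ (Real.rpow_nonneg hb0.le _)
        gcongr
      have heq : b ^ ((1/2) : ℝ) * (1 / b) = b ^ (-(1/2) : ℝ) := by
        have hbne : b ≠ 0 := hb0.ne'
        have hx : b ^ (-(1/2) : ℝ) * b = b ^ ((1/2) : ℝ) := by
          nth_rewrite 2 [← Real.rpow_one b]
          rw [← Real.rpow_add hb0]
          norm_num
        rw [← hx]
        field_simp
      calc ∫ t in (1/b)..c, t ^ (-(1/2) : ℝ) * Real.exp (-(b * t))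
          ≤ b ^ ((1/2) : ℝ) * ((Real.exp (-(b * (1/b))) - Real.exp (-(b * c))) / b) := by
            rw [← hev]; exact hstep
        _ ≤ b ^ ((1/2) : ℝ) * (1 / b) := hfin
        _ = b ^ (-(1/2) : ℝ) := heq
    calc ∫ t in (0:ℝ)..c, t ^ (-(1/2) : ℝ) * Real.exp (-(b * t))
        = _ + _ := hsplit
      _ ≤ 2 * b ^ (-(1/2) : ℝ) + b ^ (-(1/2) : ℝ) := add_le_add hpart1 hpart2
      _ = 3 * b ^ (-(1/2) : ℝ) := by ring

end GreenAux

set_option maxHeartbeats 2000000 in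
theorem greenGz_log_integral_bound :
    ∃ C : ℝ, 0 < C ∧ ∀ (k : ℤ), k ≠ 0 → ∀ y ∈ Set.Icc (0:ℝ) 1, ∀ m : ℕ, m ≤ 5 →
      (∫ z in (0:ℝ)..1, |greenGz k y z| * |Real.log (|z - y|)| ^ m)
        ≤ C * (Real.log (2 + |(k:ℝ)|)) ^ m / |(k:ℝ)| := by
  refine ⟨10 ^ 7, by norm_num, ?_⟩
  intro k hk y hy m hm
  obtain ⟨hy0, hy1⟩ := hy
  set a : ℝ := |(k:ℝ)| with ha_def
  have ha1 : (1:ℝ) ≤ a := by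
    have h := Int.one_le_abs hk
    have h2 : ((1:ℤ):ℝ) ≤ ((|k|:ℤ):ℝ) := by exact_mod_cast h
    simpa [ha_def, Int.cast_abs] using h2
  have ha0 : (0:ℝ) < a := by linarith
  set L : ℝ := Real.log (2 + a) with hL_def
  have hL1 : (1:ℝ) ≤ L := by
    rw [hL_def, Real.le_log_iff_exp_le (by linarith)]
    have := Real.exp_one_lt_d9; linarith
  have hL0 : (0:ℝ) < L := by linarith
  have hRHS : (0:ℝ) ≤ 10 ^ 7 * L ^ m / a := by positivity
  by_cases hint : IntervalIntegrable
      (fun z => |greenGz k y z| * |Real.log (|z - y|)| ^ m) volume 0 1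
  swap
  · rw [intervalIntegral.integral_undef hint]; exact hRHS
  set D : ℝ := 2 * 10 ^ 5 * L ^ m * a ^ (-(1/2) : ℝ) with hD_def
  have hD0 : (0:ℝ) < D := by
    have : (0:ℝ) < a ^ (-(1/2) : ℝ) := Real.rpow_pos_of_pos ha0 _
    positivity
  -- pointwise bound
  have hpt : ∀ z ∈ Set.Icc (0:ℝ) 1, z ≠ y →
      |greenGz k y z| * |Real.log (|z - y|)| ^ m
        ≤ D * (|z - y| ^ (-(1/2) : ℝ) * Real.exp (-(a/2 * |z - y|))) := by
    intro z hz hzy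
    have ht0 : 0 < |z - y| := abs_pos.mpr (sub_ne_zero.mpr hzy)
    have ht1 : |z - y| ≤ 1 := by
      rw [abs_sub_le_iff]
      constructor
      · linarith [hz.2]
      · linarith [hz.1]
    have hg := GreenAux.green_bound hk hy0 hy1 hz.1 hz.2
    have hl := GreenAux.log_pow_bound ha1 ht0 ht1 hm
    have h1 : |greenGz k y z| * |Real.log (|z - y|)| ^ m
        ≤ (2 * Real.exp (-(a * |z - y|))) *
          (L ^ m * (10 ^ 5 * (a * |z - y|) ^ (-(1/2) : ℝ) * Real.exp (a * |z - y| / 2))) :=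
      mul_le_mul hg hl (by positivity) (by positivity)
    refine h1.trans (le_of_eq ?_)
    have hexp : Real.exp (-(a * |z - y|)) * Real.exp (a * |z - y| / 2)
        = Real.exp (-(a/2 * |z - y|)) := by rw [← Real.exp_add]; ring_nf
    rw [Real.mul_rpow ha0.le ht0.le]
    calc (2 * Real.exp (-(a * |z - y|))) *
          (L ^ m * (10 ^ 5 * (a ^ (-(1/2) : ℝ) * |z - y| ^ (-(1/2) : ℝ))
            * Real.exp (a * |z - y| / 2)))
        = (2 * 10 ^ 5 * L ^ m * a ^ (-(1/2) : ℝ)) * (|z - y| ^ (-(1/2) : ℝ)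
            * (Real.exp (-(a * |z - y|)) * Real.exp (a * |z - y| / 2))) := by ring
      _ = D * (|z - y| ^ (-(1/2) : ℝ) * Real.exp (-(a/2 * |z - y|))) := by
          rw [hexp, hD_def]
  -- integrability of the two pieces of f
  have hI1 : IntervalIntegrable
      (fun z => |greenGz k y z| * |Real.log (|z - y|)| ^ m) volume 0 y :=
    hint.mono_set (by
      rw [Set.uIcc_of_le hy0, Set.uIcc_of_le (zero_le_one)]
      exact Set.Icc_subset_Icc le_rfl hy1)
  have hI2 : IntervalIntegrable
      (fun z => |greenGz k y z| * |Real.log (|z - y|)| ^ m) volume y 1 :=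
    hint.mono_set (by
      rw [Set.uIcc_of_le hy1, Set.uIcc_of_le (zero_le_one)]
      exact Set.Icc_subset_Icc hy0 le_rfl)
  -- comparison functions
  have hb2 : (1:ℝ)/2 ≤ a/2 := by linarith
  -- piece 2 : on [y,1]
  have h2i : IntervalIntegrable
      (fun z => (z - y) ^ (-(1/2) : ℝ) * Real.exp (-(a/2 * (z - y)))) volume y 1 := by
    have h := (GreenAux.rho_integrable (a/2) 0 (1 - y)).comp_sub_right y
    rw [zero_add, sub_add_cancel] at h
    exact h
  have hg2int : IntervalIntegrable
      (fun z => D * ((z - y) ^ (-(1/2) : ℝ) * Real.exp (-(a/2 * (z - y))))) volume y 1 :=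
    h2i.const_mul D
  have hne2 : ∀ᵐ (z : ℝ) ∂(volume.restrict (Set.Icc y 1)), z ≠ y := by
    apply MeasureTheory.ae_restrict_of_ae
    rw [MeasureTheory.ae_iff]
    have hset : {z : ℝ | ¬ z ≠ y} = {y} := by ext z; simp
    rw [hset]
    exact Real.volume_singleton
  have hmono2 : (∫ z in y..1, |greenGz k y z| * |Real.log (|z - y|)| ^ m)
      ≤ ∫ z in y..1, D * ((z - y) ^ (-(1/2) : ℝ) * Real.exp (-(a/2 * (z - y)))) := by
    apply intervalIntegral.integral_mono_ae_restrict hy1 hI2 hg2int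
    filter_upwards [MeasureTheory.ae_restrict_mem measurableSet_Icc, hne2] with z hz hzy
    have hz01 : z ∈ Set.Icc (0:ℝ) 1 := ⟨le_trans hy0 hz.1, hz.2⟩
    have hpz := hpt z hz01 hzy
    have habs : |z - y| = z - y := abs_of_nonneg (by linarith [hz.1])
    rw [habs] at hpz ⊢
    exact hpz
  have hcv2 : (∫ z in y..1, (z - y) ^ (-(1/2) : ℝ) * Real.exp (-(a/2 * (z - y))))
      = ∫ t in (y - y)..(1 - y), t ^ (-(1/2) : ℝ) * Real.exp (-(a/2 * t)) :=
    intervalIntegral.integral_comp_sub_right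
      (fun t => t ^ (-(1/2) : ℝ) * Real.exp (-(a/2 * t))) y
  rw [sub_self] at hcv2
  have hval2 : (∫ z in y..1, D * ((z - y) ^ (-(1/2) : ℝ) * Real.exp (-(a/2 * (z - y)))))
      ≤ D * (3 * (a/2) ^ (-(1/2) : ℝ)) := by
    rw [intervalIntegral.integral_const_mul, hcv2]
    exact mul_le_mul_of_nonneg_left
      (GreenAux.rho_integral_bound hb2 (by linarith) (by linarith)) hD0.le
  -- piece 1 : on [0,y]
  have h1i : IntervalIntegrable
      (fun z => (y - z) ^ (-(1/2) : ℝ) * Real.exp (-(a/2 * (y - z)))) volume 0 y := by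
    have h := (GreenAux.rho_integrable (a/2) 0 y).comp_sub_left y
    rw [sub_zero, sub_self] at h
    exact h.symm
  have hg1int : IntervalIntegrable
      (fun z => D * ((y - z) ^ (-(1/2) : ℝ) * Real.exp (-(a/2 * (y - z))))) volume 0 y :=
    h1i.const_mul D
  have hne1 : ∀ᵐ (z : ℝ) ∂(volume.restrict (Set.Icc 0 y)), z ≠ y := by
    apply MeasureTheory.ae_restrict_of_ae
    rw [MeasureTheory.ae_iff]
    have hset : {z : ℝ | ¬ z ≠ y} = {y} := by ext z; simp
    rw [hset]
    exact Real.volume_singleton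
  have hmono1 : (∫ z in (0:ℝ)..y, |greenGz k y z| * |Real.log (|z - y|)| ^ m)
      ≤ ∫ z in (0:ℝ)..y, D * ((y - z) ^ (-(1/2) : ℝ) * Real.exp (-(a/2 * (y - z)))) := by
    apply intervalIntegral.integral_mono_ae_restrict hy0 hI1 hg1int
    filter_upwards [MeasureTheory.ae_restrict_mem measurableSet_Icc, hne1] with z hz hzy
    have hz01 : z ∈ Set.Icc (0:ℝ) 1 := ⟨hz.1, le_trans hz.2 hy1⟩
    have hpz := hpt z hz01 hzy
    have habs : |z - y| = y - z := by
      rw [abs_sub_comm]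
      exact abs_of_nonneg (by linarith [hz.2])
    rw [habs] at hpz ⊢
    exact hpz
  have hcv1 : (∫ z in (0:ℝ)..y, (y - z) ^ (-(1/2) : ℝ) * Real.exp (-(a/2 * (y - z))))
      = ∫ t in (y - y)..(y - 0), t ^ (-(1/2) : ℝ) * Real.exp (-(a/2 * t)) :=
    intervalIntegral.integral_comp_sub_left
      (fun t => t ^ (-(1/2) : ℝ) * Real.exp (-(a/2 * t))) y
  rw [sub_self, sub_zero] at hcv1
  have hval1 : (∫ z in (0:ℝ)..y, D * ((y - z) ^ (-(1/2) : ℝ) * Real.exp (-(a/2 * (y - z)))))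
      ≤ D * (3 * (a/2) ^ (-(1/2) : ℝ)) := by
    rw [intervalIntegral.integral_const_mul, hcv1]
    exact mul_le_mul_of_nonneg_left
      (GreenAux.rho_integral_bound hb2 (by linarith) (by linarith)) hD0.le
  -- assemble
  have hsplit : (∫ z in (0:ℝ)..1, |greenGz k y z| * |Real.log (|z - y|)| ^ m)
      = (∫ z in (0:ℝ)..y, |greenGz k y z| * |Real.log (|z - y|)| ^ m)
        + ∫ z in y..1, |greenGz k y z| * |Real.log (|z - y|)| ^ m :=
    (intervalIntegral.integral_add_adjacent_intervals hI1 hI2).symm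
  rw [hsplit]
  have htot : (∫ z in (0:ℝ)..y, |greenGz k y z| * |Real.log (|z - y|)| ^ m)
      + (∫ z in y..1, |greenGz k y z| * |Real.log (|z - y|)| ^ m)
      ≤ D * (3 * (a/2) ^ (-(1/2) : ℝ)) + D * (3 * (a/2) ^ (-(1/2) : ℝ)) :=
    add_le_add (le_trans hmono1 hval1) (le_trans hmono2 hval2)
  refine htot.trans ?_
  -- final numeric computation
  have hQ : (a/2) ^ (-(1/2) : ℝ) = a ^ (-(1/2) : ℝ) * 2 ^ ((1/2) : ℝ) := by
    rw [Real.div_rpow ha0.le (by norm_num), Real.rpow_neg (by norm_num : (0:ℝ) ≤ 2),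
      div_eq_mul_inv, inv_inv]
  have hPP : a ^ (-(1/2) : ℝ) * a ^ (-(1/2) : ℝ) = a⁻¹ := by
    rw [← Real.rpow_add ha0]
    norm_num [Real.rpow_neg_one]
  have h2half : (2:ℝ) ^ ((1/2) : ℝ) ≤ 2 := by
    calc (2:ℝ) ^ ((1/2) : ℝ) ≤ (2:ℝ) ^ ((1:ℝ)) :=
          Real.rpow_le_rpow_of_exponent_le (by norm_num) (by norm_num)
      _ = 2 := Real.rpow_one 2
  have hLm : (0:ℝ) < L ^ m := by positivity
  have hain : (0:ℝ) < a⁻¹ := by positivity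
  have h2h0 : (0:ℝ) ≤ (2:ℝ) ^ ((1/2) : ℝ) := Real.rpow_nonneg (by norm_num) _
  calc D * (3 * (a/2) ^ (-(1/2) : ℝ)) + D * (3 * (a/2) ^ (-(1/2) : ℝ))
      = 12 * 10 ^ 5 * (2:ℝ) ^ ((1/2) : ℝ) * L ^ m
          * (a ^ (-(1/2) : ℝ) * a ^ (-(1/2) : ℝ)) := by
        rw [hD_def, hQ]; ring
    _ = 12 * 10 ^ 5 * (2:ℝ) ^ ((1/2) : ℝ) * L ^ m * a⁻¹ := by rw [hPP]
    _ ≤ 12 * 10 ^ 5 * 2 * L ^ m * a⁻¹ := by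
        have h1 : 12 * 10 ^ 5 * (2:ℝ) ^ ((1/2) : ℝ) ≤ 12 * 10 ^ 5 * 2 := by nlinarith
        have h2 : (0:ℝ) ≤ L ^ m * a⁻¹ := by positivity
        nlinarith
    _ ≤ 10 ^ 7 * L ^ m * a⁻¹ := by
        have h2 : (0:ℝ) ≤ L ^ m * a⁻¹ := by positivity
        nlinarith
    _ = 10 ^ 7 * L ^ m / a := by rw [div_eq_mul_inv]
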